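/- Assume Condition (*). Then G has no illegal edges: every edge {i, j} of G is either a C-edge (j = i+1 or i = j+1 in ZMod (2n)) or joins two vertices of the same parity. -/
import Mathlib


/-- A perfect matching of `G`: a set of edges of `G` such that every vertex
lies in exactly one edge of the set. -/
def IsPerfectMatching {V : Type*} (G : SimpleGraph V) (M : Set (Sym2 V)) : Prop :=
  M ⊆ G.edgeSet ∧ ∀ v : V, ∃! e : Sym2 V, e ∈ M ∧ v ∈ e

/-- `c` is a PMValid `k`-edge-colouring of `G`: it colours the edges of `G` with colours
in `{1, …, k}`, every perfect matching of `G` is monochromatic under `c`, and every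
colour class contains a perfect matching. -/
def PMValid {V : Type*} (G : SimpleGraph V) (c : Sym2 V → ℕ) (k : ℕ) : Prop :=
  (∀ e ∈ G.edgeSet, c e ∈ Finset.Icc 1 k) ∧
  (∀ M : Set (Sym2 V), IsPerfectMatching G M → ∀ e ∈ M, ∀ e' ∈ M, c e = c e') ∧
  (∀ i ∈ Finset.Icc 1 k, ∃ M : Set (Sym2 V), IsPerfectMatching G M ∧ ∀ e ∈ M, c e = i)

/-- `G` is matching covered: every edge lies in some perfect matching. -/
def MatchingCovered {V : Type*} (G : SimpleGraph V) : Prop :=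
  ∀ e ∈ G.edgeSet, ∃ M : Set (Sym2 V), IsPerfectMatching G M ∧ e ∈ M

/-- `e` is a C-edge: an edge of the distinguished Hamiltonian cycle `0, 1, …, 2n-1`
on `ZMod (2n)`, i.e. `e = {i, i+1}` for some `i`. -/
def IsCEdge (n : ℕ) (e : Sym2 (ZMod (2 * n))) : Prop :=
  ∃ i : ZMod (2 * n), e = s(i, i + 1)

/-- `e` is a legal edge: it joins two vertices of the same parity
(the parity of the residue is well defined since the modulus `2n` is even). -/
def IsLegal (n : ℕ) (e : Sym2 (ZMod (2 * n))) : Prop :=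
  ∃ a b : ZMod (2 * n), e = s(a, b) ∧ a.val % 2 = b.val % 2

/-- `k` lies on the arc strictly between `i` and `j` in clockwise (increasing) order,
i.e. `k ∈ {i+1, i+2, …, j-1}`. -/
def InArc (n : ℕ) (i j k : ZMod (2 * n)) : Prop :=
  0 < (k - i).val ∧ (k - i).val < (j - i).val

/-- Edges `e = {a, b}` and `e'` cross: `e'` has one endpoint in `P(e)` (the arc strictly
between `a` and `b`) and its other endpoint in `P'(e)` (the arc strictly between `b` and `a`). -/
def Crosses (n : ℕ) (e e' : Sym2 (ZMod (2 * n))) : Prop :=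
  ∃ a b x y : ZMod (2 * n), e = s(a, b) ∧ e' = s(x, y) ∧ InArc n a b x ∧ InArc n b a y

/-- `{e, e'}` is a drum: an unordered pair of crossing legal edges of the form
`{u, v}` and `{u+1, v+1}`. -/
def IsDrum (n : ℕ) (e e' : Sym2 (ZMod (2 * n))) : Prop :=
  IsLegal n e ∧ IsLegal n e' ∧ Crosses n e e' ∧
  ∃ u v : ZMod (2 * n),
    (e = s(u, v) ∧ e' = s(u + 1, v + 1)) ∨ (e' = s(u, v) ∧ e = s(u + 1, v + 1))

/-- Condition (*): `n ≥ 3`, `G` (on vertex set `ZMod (2n)`) contains every C-edge,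
`G` is matching covered, `c` is a PMValid 2-edge-colouring of `G` with colours
red (= 1) and blue (= 2), and the C-edges are coloured alternately:
the edge `{i, i+1}` is red when `i` is odd and blue when `i` is even. -/
def CondStar (n : ℕ) (G : SimpleGraph (ZMod (2 * n))) (c : Sym2 (ZMod (2 * n)) → ℕ) : Prop :=
  3 ≤ n ∧ (∀ i : ZMod (2 * n), G.Adj i (i + 1)) ∧ MatchingCovered G ∧ PMValid G c 2 ∧
  ∀ i : ZMod (2 * n), c (s(i, i + 1)) = if i.val % 2 = 1 then 1 else 2

lemma no_illegal (n : ℕ) (hn : 3 ≤ n) (G : SimpleGraph (ZMod (2 * n)))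
    (c : Sym2 (ZMod (2 * n)) → ℕ)
    (hC : ∀ i : ZMod (2 * n), G.Adj i (i + 1))
    (hPM : PMValid G c 2)
    (halt : ∀ i : ZMod (2 * n), c (s(i, i + 1)) = if i.val % 2 = 1 then 1 else 2)
    (a b : ZMod (2 * n)) (hab : G.Adj a b)
    (ha : a.val % 2 = 0) (hb : b.val % 2 = 1)
    (h1 : b ≠ a + 1) (h2 : a ≠ b + 1) : False := by
  haveI : NeZero (2 * n) := ⟨by omega⟩
  set d := (b - a).val with hd
  have h2n : 6 ≤ 2 * n := by omega
  have hdlt : d < 2 * n := ZMod.val_lt _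
  have castval : ∀ x : ZMod (2 * n), ((x.val : ℕ) : ZMod (2 * n)) = x := fun x => by
    simp [ZMod.natCast_val, ZMod.cast_id]
  have cast_inj : ∀ {x y : ℕ}, x < 2 * n → y < 2 * n →
      (x : ZMod (2 * n)) = (y : ZMod (2 * n)) → x = y := by
    intro x y hx hy hxy
    have := (ZMod.natCast_eq_natCast_iff _ _ _).mp hxy
    rwa [Nat.ModEq, Nat.mod_eq_of_lt hx, Nat.mod_eq_of_lt hy] at this
  have val_add2 : ∀ x y : ZMod (2 * n), (x + y).val % 2 = (x.val + y.val) % 2 := by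
    intro x y
    rw [ZMod.val_add]
    exact Nat.mod_mod_of_dvd _ ⟨n, rfl⟩
  have hBA : ((d : ℕ) : ZMod (2 * n)) = b - a := castval _
  have hdodd : d % 2 = 1 := by
    have h3 : (b - a) + a = b := by ring
    have h4 := val_add2 (b - a) a
    rw [h3] at h4
    omega
  have hd0 : d ≠ 0 := by
    intro h
    have hba : b - a = 0 := by rw [← hBA, h]; simp
    exact hab.ne (sub_eq_zero.mp hba).symm
  have hd1 : d ≠ 1 := by
    intro h
    apply h1
    have hba : b - a = 1 := by rw [← hBA, h]; norm_num
    have := eq_add_of_sub_eq hba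
    rw [this]; ring
  have hdtop : d ≠ 2 * n - 1 := by
    intro h
    apply h2
    have hcast : ((2 * n - 1 : ℕ) : ZMod (2 * n)) = -1 := by
      rw [Nat.cast_sub (by omega)]
      simp
    have hba : b - a = -1 := by rw [← hBA, h, hcast]
    have := eq_add_of_sub_eq hba
    rw [this]; ring
  have hd3 : 3 ≤ d := by omega
  have hdub : d + 1 < 2 * n := by omega
  have hcond_ub : ∀ t : ℕ, t < 2 * n → ((t % 2 = 1 ∧ t < d) ∨ (t % 2 = 0 ∧ d < t)) →
      t + 1 < 2 * n := by
    rintro t ht (⟨h1', h2'⟩ | ⟨h1', h2'⟩) <;> omega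
  set M : Set (Sym2 (ZMod (2 * n))) :=
    insert (s(a, b)) {e' | ∃ t : ℕ, t < 2 * n ∧ ((t % 2 = 1 ∧ t < d) ∨ (t % 2 = 0 ∧ d < t)) ∧
      e' = s(a + (t : ZMod (2 * n)), a + t + 1)} with hM
  have hMpm : IsPerfectMatching G M := by
    constructor
    · intro e' he'
      rcases Set.mem_insert_iff.mp he' with rfl | ⟨t, ht, hc', rfl⟩
      · exact hab
      · exact hC _
    · intro v
      have hs : (v - a).val < 2 * n := ZMod.val_lt _
      set s := (v - a).val with hsdef
      have hv : v = a + (s : ZMod (2 * n)) := by rw [castval]; ring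
      have hmemC : ∀ t : ℕ, t < 2 * n → ((t % 2 = 1 ∧ t < d) ∨ (t % 2 = 0 ∧ d < t)) →
          v ∈ (s(a + (t : ZMod (2 * n)), a + t + 1) : Sym2 (ZMod (2 * n))) →
          t = s ∨ t + 1 = s := by
        intro t ht hc' hvmem
        have ht1 := hcond_ub t ht hc'
        rw [Sym2.mem_iff] at hvmem
        rcases hvmem with hh | hh
        · left
          rw [hv] at hh
          exact (cast_inj ht hs (add_left_cancel hh.symm)).symm ▸ rfl
        · right
          rw [hv] at hh
          have hh' : a + (s : ZMod (2 * n)) = a + ((t : ZMod (2 * n)) + 1) := by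
            rw [hh]; ring
          have : ((t + 1 : ℕ) : ZMod (2 * n)) = (s : ZMod (2 * n)) := by
            push_cast
            exact (add_left_cancel hh').symm
          exact cast_inj ht1 hs this
      have hmemE : v ∈ (s(a, b) : Sym2 (ZMod (2 * n))) → s = 0 ∨ s = d := by
        intro hm
        rw [Sym2.mem_iff] at hm
        rcases hm with hh | hh
        · left
          rw [hv] at hh
          have : (s : ZMod (2 * n)) = ((0 : ℕ) : ZMod (2 * n)) := by
            have := hh
            simpa using left_eq_add.mp hh.symm
          exact cast_inj hs (by omega) this
        · right
          rw [hv] at hh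
          have : (s : ZMod (2 * n)) = ((d : ℕ) : ZMod (2 * n)) := by
            rw [hBA]
            have : (s : ZMod (2 * n)) = b - a := by rw [← hh]; ring
            exact this
          exact cast_inj hs hdlt this
      by_cases hs0 : s = 0
      · refine ⟨s(a, b), ⟨Set.mem_insert _ _, ?_⟩, ?_⟩
        · rw [Sym2.mem_iff]; left; rw [hv, hs0]; simp
        · rintro e'' ⟨he'', hve''⟩
          rcases Set.mem_insert_iff.mp he'' with rfl | ⟨t, ht, hc', rfl⟩
          · rfl
          · exfalso
            rcases hmemC t ht hc' hve'' with hh | hh <;>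
              rcases hc' with ⟨u1, u2⟩ | ⟨u1, u2⟩ <;> omega
      · by_cases hsd : s = d
        · refine ⟨s(a, b), ⟨Set.mem_insert _ _, ?_⟩, ?_⟩
          · rw [Sym2.mem_iff]; right; rw [hv, hsd, hBA]; ring
          · rintro e'' ⟨he'', hve''⟩
            rcases Set.mem_insert_iff.mp he'' with rfl | ⟨t, ht, hc', rfl⟩
            · rfl
            · exfalso
              rcases hmemC t ht hc' hve'' with hh | hh <;>
                rcases hc' with ⟨u1, u2⟩ | ⟨u1, u2⟩ <;> omega
        · have key : ∃ t₀ : ℕ, t₀ < 2 * n ∧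
              ((t₀ % 2 = 1 ∧ t₀ < d) ∨ (t₀ % 2 = 0 ∧ d < t₀)) ∧
              (t₀ = s ∨ t₀ + 1 = s) ∧
              ∀ t : ℕ, ((t % 2 = 1 ∧ t < d) ∨ (t % 2 = 0 ∧ d < t)) →
                (t = s ∨ t + 1 = s) → t = t₀ := by
            rcases Nat.lt_or_ge s d with hlt | hge
            · rcases Nat.mod_two_eq_zero_or_one s with hp | hp
              · refine ⟨s - 1, by omega, Or.inl ⟨by omega, by omega⟩, Or.inr (by omega), ?_⟩
                rintro t (⟨u1, u2⟩ | ⟨u1, u2⟩) (hh | hh) <;> omega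
              · refine ⟨s, hs, Or.inl ⟨hp, hlt⟩, Or.inl rfl, ?_⟩
                rintro t (⟨u1, u2⟩ | ⟨u1, u2⟩) (hh | hh) <;> omega
            · have hgt : d < s := by omega
              rcases Nat.mod_two_eq_zero_or_one s with hp | hp
              · refine ⟨s, hs, Or.inr ⟨hp, hgt⟩, Or.inl rfl, ?_⟩
                rintro t (⟨u1, u2⟩ | ⟨u1, u2⟩) (hh | hh) <;> omega
              · refine ⟨s - 1, by omega, Or.inr ⟨by omega, by omega⟩, Or.inr (by omega), ?_⟩
                rintro t (⟨u1, u2⟩ | ⟨u1, u2⟩) (hh | hh) <;> omega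
          obtain ⟨t₀, ht₀, hct₀, hts₀, huniq⟩ := key
          refine ⟨s(a + (t₀ : ZMod (2 * n)), a + t₀ + 1),
            ⟨Set.mem_insert_iff.mpr (Or.inr ⟨t₀, ht₀, hct₀, rfl⟩), ?_⟩, ?_⟩
          · rw [Sym2.mem_iff]
            rcases hts₀ with hh | hh
            · left; rw [hv, hh]
            · right; rw [hv, ← hh]; push_cast; ring
          · rintro e'' ⟨he'', hve''⟩
            rcases Set.mem_insert_iff.mp he'' with rfl | ⟨t, ht, hc', rfl⟩
            · exfalso
              rcases hmemE hve'' with hh | hh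
              · exact hs0 hh
              · exact hsd hh
            · rw [huniq t hc' (hmemC t ht hc' hve'')]
  have h1m : (s(a + ((1 : ℕ) : ZMod (2 * n)), a + (1 : ℕ) + 1)) ∈ M :=
    Set.mem_insert_iff.mpr (Or.inr ⟨1, by omega, Or.inl ⟨rfl, by omega⟩, rfl⟩)
  have h2m : (s(a + ((d + 1 : ℕ) : ZMod (2 * n)), a + (d + 1 : ℕ) + 1)) ∈ M :=
    Set.mem_insert_iff.mpr (Or.inr ⟨d + 1, by omega, Or.inr ⟨by omega, by omega⟩, rfl⟩)
  have hmono := hPM.2.1 M hMpm _ h1m _ h2m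
  have hv1 : (a + ((1 : ℕ) : ZMod (2 * n))).val % 2 = 1 := by
    rw [val_add2]
    rw [ZMod.val_cast_of_lt (by omega : (1 : ℕ) < 2 * n)]
    omega
  have hv2 : (a + ((d + 1 : ℕ) : ZMod (2 * n))).val % 2 = 0 := by
    rw [val_add2]
    rw [ZMod.val_cast_of_lt (by omega : d + 1 < 2 * n)]
    omega
  have hc1 : c (s(a + ((1 : ℕ) : ZMod (2 * n)), a + (1 : ℕ) + 1)) = 1 := by
    rw [halt (a + ((1 : ℕ) : ZMod (2 * n))), if_pos hv1]
  have hc2 : c (s(a + ((d + 1 : ℕ) : ZMod (2 * n)), a + (d + 1 : ℕ) + 1)) = 2 := by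
    rw [halt (a + ((d + 1 : ℕ) : ZMod (2 * n)))]
    rw [hv2]
    norm_num
  omega

theorem statement_2 (n : ℕ) (G : SimpleGraph (ZMod (2 * n)))
    (c : Sym2 (ZMod (2 * n)) → ℕ) (h : CondStar n G c) :
    ∀ e ∈ G.edgeSet, IsCEdge n e ∨ IsLegal n e := by
  obtain ⟨hn, hC, _hmc, hPM, halt⟩ := h
  intro e
  induction e using Sym2.inductionOn with
  | hf a b =>
    intro he
    have hab : G.Adj a b := G.mem_edgeSet.mp he
    by_cases hc1 : b = a + 1
    · exact Or.inl ⟨a, by rw [hc1]⟩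
    by_cases hc2 : a = b + 1
    · exact Or.inl ⟨b, by rw [hc2, Sym2.eq_swap]⟩
    by_cases hpar : a.val % 2 = b.val % 2
    · exact Or.inr ⟨a, b, rfl, hpar⟩
    exfalso
    have pa := Nat.mod_two_eq_zero_or_one a.val
    have pb := Nat.mod_two_eq_zero_or_one b.val
    rcases pa with h0 | h1
    · exact no_illegal n hn G c hC hPM halt a b hab h0 (by omega) hc1 hc2
    · exact no_illegal n hn G c hC hPM halt b a hab.symm (by omega) h1 hc2 hc1
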